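/- Let $0 < a_i \le b_i$ for $i=1,\dots,n$, $w \in \mathbb{R}^n$, $1 \le K \le n$, and $Y = \{y \in \mathbb{R}^n \mid \|y\|_0 \le K, y_i \in \{0\} \cup [a_i,b_i]\}$. Define $r_i = \min_{t \in [a_i,b_i]}(t-w_i)^2$, $v_i = r_i - w_i^2$, and let $\bar{z} \in \{0,1\}^n$ be any minimizer of $v^T z$ over $\{z \in \{0,1\}^n : e^T z \le K\}$ satisfying $\bar z_i = 1 \Rightarrow v_i \le 0$. Then $\bar{y}$ with $\bar{y}_i = \bar{z}_i \cdot \min\{b_i, \max\{w_i, a_i\}\}$ is a minimizer of $\sum_{i=1}^n (y_i - w_i)^2$ over $Y$. -/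

import Mathlib

open Finset

theorem stmt5 (n K : ℕ) (hK1 : 1 ≤ K) (hKn : K ≤ n)
    (a b w r : Fin n → ℝ) (hab : ∀ i, 0 < a i ∧ a i ≤ b i)
    (hr : ∀ i, IsLeast ((fun t => (t - w i) ^ 2) '' Set.Icc (a i) (b i)) (r i))
    (v : Fin n → ℝ) (hv : ∀ i, v i = r i - (w i) ^ 2)
    (zbar : Fin n → ℝ) (hz01 : ∀ i, zbar i = 0 ∨ zbar i = 1)
    (hzfeas : ∑ i, zbar i ≤ (K : ℝ))
    (hzopt : ∀ z : Fin n → ℝ, (∀ i, z i = 0 ∨ z i = 1) → ∑ i, z i ≤ (K : ℝ) →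
      ∑ i, v i * zbar i ≤ ∑ i, v i * z i)
    (hzsign : ∀ i, zbar i = 1 → v i ≤ 0)
    (ybar : Fin n → ℝ)
    (hy : ∀ i, ybar i = zbar i * min (b i) (max (w i) (a i))) :
    ((Finset.univ.filter fun i => ybar i ≠ 0).card ≤ K ∧
      ∀ i, ybar i = 0 ∨ ybar i ∈ Set.Icc (a i) (b i)) ∧
    ∀ y : Fin n → ℝ,
      ((Finset.univ.filter fun i => y i ≠ 0).card ≤ K ∧
        ∀ i, y i = 0 ∨ y i ∈ Set.Icc (a i) (b i)) →
      ∑ i, (ybar i - w i) ^ 2 ≤ ∑ i, (y i - w i) ^ 2 := by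
  set c : Fin n → ℝ := fun i => min (b i) (max (w i) (a i)) with hc
  have hcmem : ∀ i, c i ∈ Set.Icc (a i) (b i) := by
    intro i
    exact ⟨le_min (hab i).2 (le_max_right _ _), min_le_left _ _⟩
  have hcmin : ∀ i, ∀ t ∈ Set.Icc (a i) (b i), (c i - w i) ^ 2 ≤ (t - w i) ^ 2 := by
    intro i t ht
    obtain ⟨ht1, ht2⟩ := ht
    have hab2 := (hab i).2
    rcases le_total (w i) (a i) with h1 | h1
    · have : c i = a i := by
        simp [hc, max_eq_right h1, min_eq_right hab2]
      rw [this]; nlinarith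
    · rcases le_total (b i) (w i) with h2 | h2
      · have : c i = b i := by
          simp [hc, min_eq_left (le_max_of_le_left h2)]
      
        rw [this]; nlinarith
      · have : c i = w i := by
          simp [hc, max_eq_left h1, min_eq_right h2]
        rw [this]; nlinarith
  have hrc : ∀ i, r i = (c i - w i) ^ 2 := by
    intro i
    obtain ⟨⟨t, ht, hrt⟩, hlb⟩ := hr i
    have h1 : r i ≤ (c i - w i) ^ 2 := hlb ⟨c i, hcmem i, rfl⟩
    have h2 : (c i - w i) ^ 2 ≤ r i := hrt ▸ hcmin i t ht
    linarith
  -- sum identity for ybar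
  have hsum : ∑ i, (ybar i - w i) ^ 2 = ∑ i, (w i ^ 2 + v i * zbar i) := by
    refine Finset.sum_congr rfl fun i _ => ?_
    rcases hz01 i with h | h
    · rw [hy i, h]; ring
    · rw [hy i, h, hv i, hrc i]; ring
  constructor
  · constructor
    · have hsub : (Finset.univ.filter fun i => ybar i ≠ 0) ⊆
          Finset.univ.filter fun i => zbar i = 1 := by
        intro i hi
        simp only [Finset.mem_filter, Finset.mem_univ, true_and] at hi ⊢
        rcases hz01 i with h | h
        · exact absurd (by rw [hy i, h]; ring) hi
        · exact h
      have hcard : ((Finset.univ.filter fun i => zbar i = 1).card : ℝ) = ∑ i, zbar i := by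
        rw [Finset.card_filter]
        push_cast
        refine Finset.sum_congr rfl fun i _ => ?_
        rcases hz01 i with h | h <;> simp [h]
      have : ((Finset.univ.filter fun i => zbar i = 1).card : ℝ) ≤ (K : ℝ) := by
        rw [hcard]; exact hzfeas
      have h2 : (Finset.univ.filter fun i => zbar i = 1).card ≤ K := by exact_mod_cast this
      exact le_trans (Finset.card_le_card hsub) h2
    · intro i
      rcases hz01 i with h | h
      · left; rw [hy i, h]; ring
      · right; rw [hy i, h, one_mul]; exact hcmem i
  · intro y ⟨hycard, hymem⟩
    set z : Fin n → ℝ := fun i => if y i = 0 then 0 else 1 with hzdef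
    have hz01' : ∀ i, z i = 0 ∨ z i = 1 := by
      intro i; by_cases h : y i = 0 <;> simp [hzdef, h]
    have hzsum : ∑ i, z i = ((Finset.univ.filter fun i => y i ≠ 0).card : ℝ) := by
      rw [Finset.card_filter]
      push_cast
      refine Finset.sum_congr rfl fun i _ => ?_
      by_cases h : y i = 0 <;> simp [hzdef, h]
    have hzfeas' : ∑ i, z i ≤ (K : ℝ) := by
      rw [hzsum]; exact_mod_cast hycard
    have hterm : ∀ i, w i ^ 2 + v i * z i ≤ (y i - w i) ^ 2 := by
      intro i
      by_cases h : y i = 0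
      · simp only [hzdef, h, if_pos]
        nlinarith
      · have hmem : y i ∈ Set.Icc (a i) (b i) := (hymem i).resolve_left h
        have : r i ≤ (y i - w i) ^ 2 := (hr i).2 ⟨y i, hmem, rfl⟩
        simp only [hzdef, h, if_neg, if_false]
        rw [hv i]; linarith
    calc ∑ i, (ybar i - w i) ^ 2 = ∑ i, (w i ^ 2 + v i * zbar i) := hsum
      _ ≤ ∑ i, (w i ^ 2 + v i * z i) := by
          rw [Finset.sum_add_distrib, Finset.sum_add_distrib]
          exact add_le_add le_rfl (hzopt z hz01' hzfeas')
      _ ≤ ∑ i, (y i - w i) ^ 2 := Finset.sum_le_sum fun i _ => hterm i
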